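/- Suppose κ is a regular uncountable cardinal and there is an upper-regressive colouring c : [κ]² → θ such that for every cofinal B ⊆ κ there exists η < ν with otp(c[{η} ⊛ B]) = θ, where ν < κ is an infinite cardinal. Then cf(θ) ≤ ν⁺. -/

import Mathlib

open Cardinal Ordinal Set

/-- The order type of a set of ordinals. -/
noncomputable def otp (S : Set Ordinal.{0}) : Ordinal.{1} :=
  @Ordinal.type S (Subrel (· < ·) S)
    (RelEmbedding.isWellOrder (Subrel.relEmbedding (· < ·) S))

theorem otp_mono {S T : Set Ordinal.{0}} (h : S ⊆ T) : otp S ≤ otp T := by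
  unfold otp
  exact (@type_le_iff' _ _ _ _
    (RelEmbedding.isWellOrder (Subrel.relEmbedding (fun a b : Ordinal.{0} => a < b) S))
    (RelEmbedding.isWellOrder (Subrel.relEmbedding (fun a b : Ordinal.{0} => a < b) T))).2 ⟨⟨⟨Set.inclusion h, Set.inclusion_injective h⟩, Iff.rfl⟩⟩

theorem otp_Iio (o : Ordinal.{0}) : otp (Set.Iio o) = Ordinal.lift.{1} o :=
  (type_subrel _ _).trans (typein_ordinal o)

theorem sup_lt' {a o : Ordinal.{0}} (f : (Set.Iio a) → Ordinal.{0}) (h1 : a.card < o.cof)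
    (h2 : ∀ i, f i < o) : (⨆ i, f i) < o := by
  have hre : Set.range (f ∘ (equivShrink (Set.Iio a)).symm) = Set.range f :=
    (equivShrink (Set.Iio a)).symm.surjective.range_comp f
  have heq : (⨆ j, f ((equivShrink (Set.Iio a)).symm j)) = ⨆ i, f i := by
    rw [iSup, iSup, ← hre]; rfl
  rw [← heq]
  refine Ordinal.iSup_lt_ord ?_ (fun j => h2 _)
  have h3 : Cardinal.lift.{1} #(Shrink.{0} (Set.Iio a)) = #(Set.Iio a) :=
    Cardinal.lift_mk_shrink''.{1,0} (Set.Iio a)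
  rw [Ordinal.mk_Iio_ordinal] at h3
  rwa [Cardinal.lift_inj.1 h3]

noncomputable def eSeq (q : Ordinal.{0} → Ordinal.{0}) (i : Ordinal.{0}) : Ordinal.{0} :=
  ⨆ j : Set.Iio i, q (eSeq q j.1)
termination_by i
decreasing_by exact j.2

theorem eSeq_def (q : Ordinal.{0} → Ordinal.{0}) (i : Ordinal.{0}) :
    eSeq q i = ⨆ j : Set.Iio i, q (eSeq q j.1) := by rw [eSeq]

theorem eSeq_lt_eSeq {q : Ordinal.{0} → Ordinal.{0}} (hq : ∀ y, y < q y) {i j : Ordinal.{0}}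
    (h : j < i) : eSeq q j < eSeq q i := by
  have h2 : q (eSeq q j) ≤ eSeq q i := by
    rw [eSeq_def q i]
    exact Ordinal.le_iSup (fun j : Set.Iio i => q (eSeq q j.1)) ⟨j, h⟩
  exact (hq _).trans_le h2

theorem eSeq_le_eSeq {q : Ordinal.{0} → Ordinal.{0}} (hq : ∀ y, y < q y) {i j : Ordinal.{0}}
    (h : j ≤ i) : eSeq q j ≤ eSeq q i := by
  rcases h.lt_or_eq with h | h
  · exact (eSeq_lt_eSeq hq h).le
  · rw [h]

theorem stmt_1 (κ ν θ : Cardinal)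
    (hκreg : κ.IsRegular) (hκunc : ℵ₀ < κ)
    (hν : ℵ₀ ≤ ν) (hνκ : ν < κ) (hθ : 2 ≤ θ) (hθκ : θ ≤ κ)
    (c : Ordinal → Ordinal → Ordinal)
    (hcθ : ∀ α β : Ordinal, α < β → β < κ.ord → c α β < θ.ord)
    (hcreg : ∀ α β : Ordinal, α < β → β < κ.ord → c α β < β)
    (hwit : ∀ B : Set Ordinal, B ⊆ Set.Iio κ.ord →
      (∀ α < κ.ord, ∃ β ∈ B, α ≤ β) →
      ∃ η < ν.ord, otp {x : Ordinal | ∃ β ∈ B, η < β ∧ c η β = x} =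
        Ordinal.lift.{1} θ.ord) :
    (θ.ord).cof ≤ Order.succ ν := by
  by_contra H
  push_neg at H
  -- basic facts
  have hνcof : ν < θ.ord.cof := (Order.lt_succ ν).trans H
  have hθlim : Order.IsSuccLimit θ.ord := Ordinal.aleph0_le_cof.1 ((hν.trans_lt hνcof).le)
  have hκlim : Order.IsSuccLimit κ.ord := Cardinal.isSuccLimit_ord hκreg.aleph0_le
  have hcofκ : κ.ord.cof = κ := hκreg.cof_eq
  have hsuccνκ : Order.succ ν < κ :=
    H.trans_le ((Ordinal.cof_le_card θ.ord).trans ((Cardinal.card_ord θ).le.trans hθκ))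
  have hνsord : ℵ₀ ≤ Order.succ ν := hν.trans (Order.le_succ ν)
  have hslim : Order.IsSuccLimit (Order.succ ν).ord := Cardinal.isSuccLimit_ord hνsord
  have hsreg : (Order.succ ν).ord.cof = Order.succ ν := (Cardinal.isRegular_succ hν).cof_eq
  -- the sup function
  set F : Ordinal → Ordinal :=
    fun β => ⨆ η : Set.Iio ν.ord, if (η : Ordinal) < β then c (η : Ordinal) β else 0 with hFdef
  have hFle : ∀ η, η < ν.ord → ∀ β, η < β → c η β ≤ F β := by
    intro η hη β hηβ
    have := Ordinal.le_iSup
      (fun η : Set.Iio ν.ord => if (η : Ordinal) < β then c (η : Ordinal) β else 0) ⟨η, hη⟩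
    rwa [if_pos hηβ] at this
  have hFθ : ∀ β, β < κ.ord → F β < θ.ord := by
    intro β hβ
    refine sup_lt' _ ?_ ?_
    · rwa [Cardinal.card_ord]
    · rintro ⟨η, hη⟩
      dsimp only
      split
      · exact hcθ _ _ ‹_› hβ
      · exact hθlim.pos
  by_cases hA : ∃ ε, ε < θ.ord ∧ ∀ α, α < κ.ord →
      ∃ β, (ν.ord < β ∧ β < κ.ord ∧ F β ≤ ε) ∧ α ≤ β
  · -- Case A: a cofinal set with uniformly bounded colours
    obtain ⟨ε, hεθ, hcof⟩ := hA
    set B : Set Ordinal := {β | ν.ord < β ∧ β < κ.ord ∧ F β ≤ ε} with hBdef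
    obtain ⟨η, hην, hotp⟩ := hwit B (fun β hβ => hβ.2.1)
      (fun α hα => by obtain ⟨β, hβ, hαβ⟩ := hcof α hα; exact ⟨β, hβ, hαβ⟩)
    have hSsub : {x : Ordinal | ∃ β ∈ B, η < β ∧ c η β = x} ⊆ Set.Iio (ε + 1) := by
      rintro x ⟨β, hβ, hηβ, rfl⟩
      exact lt_of_le_of_lt (((hFle η hην β hηβ).trans hβ.2.2)) (lt_add_one ε)
    have h1 : Ordinal.lift.{1} θ.ord ≤ Ordinal.lift.{1} (ε + 1) := by
      rw [← hotp, ← otp_Iio (ε + 1)]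
      exact otp_mono hSsub
    rw [Ordinal.lift_le] at h1
    have h2 : ε + 1 < θ.ord := by
      rw [Ordinal.add_one_eq_succ]
      exact hθlim.succ_lt hεθ
    exact absurd h1 (not_le.2 h2)
  · -- Case B
    push_neg at hA
    choose! G hG1 hG2 using hA
    set G' : Ordinal → Ordinal := fun ε => if h : ε < θ.ord then G ε else 0 with hG'def
    have hG'κ : ∀ ε, G' ε < κ.ord := by
      intro ε
      rw [hG'def]
      dsimp only
      split
      · exact hG1 _ ‹_›
      · exact hκlim.pos
    set q : Ordinal → Ordinal :=
      fun y => max (max (ν.ord + 1) (y + 1)) ((⨆ ε : Set.Iio (y + 1), G' (ε : Ordinal)) + 1)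
      with hqdef
    have hq0 : ∀ y, y < q y := fun y =>
      (lt_add_one y).trans_le ((le_max_right _ _).trans (le_max_left _ _))
    have hqν : ∀ y, ν.ord < q y := fun y =>
      (lt_add_one ν.ord).trans_le ((le_max_left _ _).trans (le_max_left _ _))
    have hqG : ∀ y ε, ε ≤ y → G' ε < q y := by
      intro y ε hε
      have h1 : G' ε ≤ ⨆ ε : Set.Iio (y + 1), G' (ε : Ordinal) :=
        Ordinal.le_iSup (fun ε : Set.Iio (y + 1) => G' (ε : Ordinal))
          ⟨ε, hε.trans_lt (lt_add_one y)⟩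
      exact (h1.trans_lt (lt_add_one _)).trans_le (le_max_right _ _)
    have hqκ : ∀ y, y < κ.ord → q y < κ.ord := by
      intro y hy
      refine max_lt (max_lt ?_ ?_) ?_
      · rw [Ordinal.add_one_eq_succ]
        exact hκlim.succ_lt (Cardinal.ord_lt_ord.2 hνκ)
      · rw [Ordinal.add_one_eq_succ]
        exact hκlim.succ_lt hy
      · rw [Ordinal.add_one_eq_succ]
        refine hκlim.succ_lt (sup_lt' _ ?_ (fun _ => hG'κ _))
        rw [hcofκ]
        rw [← Cardinal.lt_ord]
        rw [Ordinal.add_one_eq_succ]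
        exact hκlim.succ_lt hy
    -- the recursive sequence and its limit
    have hbound : ∀ i, i ≤ (Order.succ ν).ord → eSeq q i < κ.ord := by
      intro i
      induction i using Ordinal.induction with
      | h i IH =>
        intro hi
        rw [eSeq_def q i]
        refine sup_lt' _ ?_ ?_
        · rw [hcofκ]
          refine lt_of_le_of_lt ?_ hsuccνκ
          have := Ordinal.card_le_card hi
          rwa [Cardinal.card_ord] at this
        · rintro ⟨j, hj⟩
          exact hqκ _ (IH j hj (hj.le.trans hi))
    set β : Ordinal := eSeq q ((Order.succ ν).ord) with hβdef
    have hβκ : β < κ.ord := hbound _ le_rfl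
    have hord0 : (0 : Ordinal) < (Order.succ ν).ord := hslim.pos
    have hterm_le : ∀ j, j < (Order.succ ν).ord → q (eSeq q j) ≤ β := by
      intro j hj
      rw [hβdef, eSeq_def q ((Order.succ ν).ord)]
      exact Ordinal.le_iSup (fun j : Set.Iio ((Order.succ ν).ord) => q (eSeq q j.1)) ⟨j, hj⟩
    have hνβ : ν.ord < β := (hqν _).trans_le (hterm_le 0 hord0)
    have hβpos : (0 : Ordinal) < β := (zero_le (a := ν.ord)).trans_lt hνβ
    -- closure under G'
    have hclo : ∀ ε, ε < β → G' ε < β := by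
      intro ε hε
      rw [hβdef, eSeq_def q ((Order.succ ν).ord)] at hε
      obtain ⟨⟨j, hj⟩, hj2⟩ := Ordinal.lt_iSup_iff.1 hε
      have h1 : q (eSeq q j) ≤ eSeq q (j + 1) := by
        rw [eSeq_def q (j + 1)]
        exact Ordinal.le_iSup (fun j' : Set.Iio (j + 1) => q (eSeq q j'.1)) ⟨j, lt_add_one j⟩
      have hj1 : j + 1 < (Order.succ ν).ord := by
        rw [Ordinal.add_one_eq_succ]; exact hslim.succ_lt hj
      exact (hqG _ _ ((hj2.trans_le h1).le)).trans_le (hterm_le _ hj1)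
    -- F β < β
    have hFβ : F β < β := by
      have htβ : ∀ η : Set.Iio ν.ord,
          (if (η : Ordinal) < β then c (η : Ordinal) β else 0) < β := by
        rintro ⟨η, hη⟩
        dsimp only
        split
        · exact hcreg _ _ ‹_› hβκ
        · exact hβpos
      have hch : ∀ η : Set.Iio ν.ord, ∃ j : Set.Iio ((Order.succ ν).ord),
          (if (η : Ordinal) < β then c (η : Ordinal) β else 0) < q (eSeq q j.1) := by
        intro η
        exact Ordinal.lt_iSup_iff.1
          ((htβ η).trans_le (le_of_eq (eSeq_def q ((Order.succ ν).ord))))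
      choose u hu using hch
      have hJ : (⨆ η : Set.Iio ν.ord, ((u η : Ordinal) + 1)) < (Order.succ ν).ord := by
        refine sup_lt' _ ?_ ?_
        · rw [Cardinal.card_ord, hsreg]
          exact Order.lt_succ ν
        · intro η
          rw [Ordinal.add_one_eq_succ]
          exact hslim.succ_lt (u η).2
      set J : Ordinal := ⨆ η : Set.Iio ν.ord, ((u η : Ordinal) + 1) with hJdef
      have hste : ∀ η : Set.Iio ν.ord,
          (if (η : Ordinal) < β then c (η : Ordinal) β else 0) ≤ eSeq q J := by
        intro η
        have h1 : q (eSeq q (u η)) ≤ eSeq q ((u η : Ordinal) + 1) := by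
          rw [eSeq_def q ((u η : Ordinal) + 1)]
          exact Ordinal.le_iSup (fun j' : Set.Iio ((u η : Ordinal) + 1) => q (eSeq q j'.1))
            ⟨(u η : Ordinal), Set.mem_Iio.2 (lt_add_one _)⟩
        have h2 : ((u η : Ordinal) + 1) ≤ J :=
          Ordinal.le_iSup (fun η : Set.Iio ν.ord => ((u η : Ordinal) + 1)) η
        exact ((hu η).trans_le h1).le.trans (eSeq_le_eSeq hq0 h2)
      have h3 : F β ≤ eSeq q J := Ordinal.iSup_le hste
      exact h3.trans_lt (eSeq_lt_eSeq hq0 hJ)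
    -- final contradiction
    have hFβθ : F β < θ.ord := hFθ _ hβκ
    have h1 : β < G (F β) := hG2 _ hFβθ β ⟨hνβ, hβκ, le_rfl⟩
    have h2 : G' (F β) < β := hclo _ hFβ
    rw [hG'def] at h2
    dsimp only at h2
    rw [dif_pos hFβθ] at h2
    exact absurd (h1.trans h2) (lt_irrefl β)
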